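/- arXiv:1708.02331 — 2 statements merged into one kernel-verified Lean document; each statement's English description precedes it below -/
import Mathlib

section
/- Let X be a g-tuple of compact self-adjoint operators on H such that 0 is in the finite interior of K_X, witnessed by an isometry Z_0 : H_1 → H^{m_0} with Z_0*(I_{m_0} ⊗ X)Z_0 = 0. Then for any positive integers m, n and any contraction W : H_n → H^m, there exists an isometry T : H_n → H^{m + n·m_0} such that W*(I_m ⊗ X)W = T*(I_{m+n·m_0} ⊗ X)T. -/
set_option maxHeartbeats 1000000
set_option synthInstance.maxHeartbeats 400000

instance piLpCompleteSpace {ι : Type*} [Fintype ι] (β : ι → Type*)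
    [∀ i, UniformSpace (β i)] [∀ i, CompleteSpace (β i)] : CompleteSpace (PiLp 2 β) :=
  inferInstance

/-- Finite amplification `I_m ⊗ X` acting on `E^m = PiLp 2 (fun _ : Fin m => E)`. -/
noncomputable def amp {E : Type*} [NormedAddCommGroup E] [InnerProductSpace ℂ E]
    (m : ℕ) (X : E →L[ℂ] E) :
    PiLp 2 (fun _ : Fin m => E) →L[ℂ] PiLp 2 (fun _ : Fin m => E) :=
  ((PiLp.continuousLinearEquiv 2 ℂ (fun _ : Fin m => E)).symm.toContinuousLinearMap).comp
    ((ContinuousLinearMap.pi fun k => X.comp (ContinuousLinearMap.proj k)).comp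
      (PiLp.continuousLinearEquiv 2 ℂ (fun _ : Fin m => E)).toContinuousLinearMap)

/-- Membership in the noncommutative convex hull `K_X`: the tuple `Y` (of operators on a
Hilbert space `E`, e.g. `E = H_n`) has the form `V* (I_H ⊗ X) V` for an isometry
`V : E → H^∞`, where `H^∞ = ℓ²(ℕ, H)` and `I_H ⊗ X` is the operator acting
componentwise as `X i` on `H^∞`. -/
noncomputable def InKX {H : Type*} [NormedAddCommGroup H] [InnerProductSpace ℂ H]
    [CompleteSpace H] {g : ℕ} (X : Fin g → H →L[ℂ] H)
    {E : Type*} [NormedAddCommGroup E] [InnerProductSpace ℂ E] [CompleteSpace E]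
    (Y : Fin g → E →L[ℂ] E) : Prop :=
  ∃ V : E →L[ℂ] lp (fun _ : ℕ => H) 2,
    (∀ x, ‖V x‖ = ‖x‖) ∧
    ∀ i, ∃ XA : lp (fun _ : ℕ => H) 2 →L[ℂ] lp (fun _ : ℕ => H) 2,
      (∀ (v : lp (fun _ : ℕ => H) 2) (k : ℕ), XA v k = X i (v k)) ∧
      Y i = ((ContinuousLinearMap.adjoint V).comp (XA.comp V))

/-- `0` is in the finite interior of `K_X`: there are `d ∈ ℕ` and a unit vector
`v ∈ H^d` with `v* (I_d ⊗ X) v = 0 ∈ ℝ^g`. -/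
noncomputable def ZeroFinInt {H : Type*} [NormedAddCommGroup H] [InnerProductSpace ℂ H]
    {g : ℕ} (X : Fin g → H →L[ℂ] H) : Prop :=
  ∃ d : ℕ, 0 < d ∧ ∃ v : PiLp 2 (fun _ : Fin d => H), ‖v‖ = 1 ∧
    ∀ i, (inner ℂ (amp d (X i) v) v : ℂ) = 0

/-- Direct sum `A ⊕ B` of operators, acting on the Hilbert space direct sum
`E ⊕ F = WithLp 2 (E × F)`. -/
noncomputable def dsum {E F : Type*} [NormedAddCommGroup E] [InnerProductSpace ℂ E]
    [NormedAddCommGroup F] [InnerProductSpace ℂ F]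
    (A : E →L[ℂ] E) (B : F →L[ℂ] F) : WithLp 2 (E × F) →L[ℂ] WithLp 2 (E × F) :=
  ((WithLp.prodContinuousLinearEquiv 2 ℂ E F).symm.toContinuousLinearMap).comp
    ((A.prodMap B).comp (WithLp.prodContinuousLinearEquiv 2 ℂ E F).toContinuousLinearMap)

/-- if `X` is a tuple of compact self-adjoint operators and `0` is in the
finite interior of `K_X`, witnessed by an isometry `Z₀ : H_1 → H^{m₀}` with
`Z₀*(I_{m₀} ⊗ X)Z₀ = 0`, then every compression of `I_m ⊗ X` by a contraction
`W : H_n → H^m` is also a compression of `I_{m+n·m₀} ⊗ X` by an isometry `T`. -/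
theorem contraction_compression_eq_isometry_compression
    {H : Type*} [NormedAddCommGroup H] [InnerProductSpace ℂ H] [CompleteSpace H]
    {g : ℕ} (X : Fin g → H →L[ℂ] H)
    (hXc : ∀ i, IsCompactOperator (X i)) (hXsa : ∀ i, IsSelfAdjoint (X i))
    (m₀ : ℕ) (hm₀ : 0 < m₀)
    (Z₀ : EuclideanSpace ℂ (Fin 1) →L[ℂ] PiLp 2 (fun _ : Fin m₀ => H))
    (hZ₀iso : ∀ x, ‖Z₀ x‖ = ‖x‖)
    (hZ₀zero : ∀ i, (ContinuousLinearMap.adjoint Z₀).comp ((amp m₀ (X i)).comp Z₀) = 0)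
    (m n : ℕ) (hm : 0 < m) (hn : 0 < n)
    (W : EuclideanSpace ℂ (Fin n) →L[ℂ] PiLp 2 (fun _ : Fin m => H))
    (hW : ‖W‖ ≤ 1) :
    ∃ T : EuclideanSpace ℂ (Fin n) →L[ℂ] PiLp 2 (fun _ : Fin (m + n * m₀) => H),
      (∀ x, ‖T x‖ = ‖x‖) ∧
      ∀ i, (ContinuousLinearMap.adjoint W).comp ((amp m (X i)).comp W) =
        (ContinuousLinearMap.adjoint T).comp ((amp (m + n * m₀) (X i)).comp T) := by
  classical
  have amp_apply : ∀ (d : ℕ) (B : H →L[ℂ] H) (v : PiLp 2 (fun _ : Fin d => H)) (k : Fin d),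
      amp d B v k = B (v k) := fun d B v k => rfl
  set A : EuclideanSpace ℂ (Fin n) →L[ℂ] EuclideanSpace ℂ (Fin n) :=
    1 - (ContinuousLinearMap.adjoint W).comp W with hA_def
  have hWx : ∀ x : EuclideanSpace ℂ (Fin n), ‖W x‖ ≤ ‖x‖ := fun x => by
    calc ‖W x‖ ≤ ‖W‖ * ‖x‖ := W.le_opNorm x
    _ ≤ 1 * ‖x‖ := mul_le_mul_of_nonneg_right hW (norm_nonneg x)
    _ = ‖x‖ := one_mul _
  have hC : IsSelfAdjoint ((ContinuousLinearMap.adjoint W).comp W) := by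
    rw [isSelfAdjoint_iff, ContinuousLinearMap.star_eq_adjoint,
      ContinuousLinearMap.adjoint_comp, ContinuousLinearMap.adjoint_adjoint]
  have hAsa : IsSelfAdjoint A := by
    rw [hA_def]
    exact @IsSelfAdjoint.sub (EuclideanSpace ℂ (Fin n) →L[ℂ] EuclideanSpace ℂ (Fin n))
      inferInstance inferInstance _ _ (IsSelfAdjoint.one _) hC
  have hApos : (0 : EuclideanSpace ℂ (Fin n) →L[ℂ] EuclideanSpace ℂ (Fin n)) ≤ A := by
    rw [ContinuousLinearMap.nonneg_iff_isPositive]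
    refine ⟨hAsa.isSymmetric, fun x => ?_⟩
    have hAx : A x = x - (ContinuousLinearMap.adjoint W) (W x) := by
      simp [hA_def]
    rw [ContinuousLinearMap.reApplyInnerSelf, hAx, inner_sub_left,
      ContinuousLinearMap.adjoint_inner_left]
    rw [map_sub]
    rw [inner_self_eq_norm_sq (𝕜 := ℂ), inner_self_eq_norm_sq (𝕜 := ℂ)]
    have := hWx x
    nlinarith [norm_nonneg (W x), norm_nonneg x]
  set D : EuclideanSpace ℂ (Fin n) →L[ℂ] EuclideanSpace ℂ (Fin n) := CFC.sqrt A with hD_def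
  have hDpos : (0 : EuclideanSpace ℂ (Fin n) →L[ℂ] EuclideanSpace ℂ (Fin n)) ≤ D :=
    CFC.sqrt_nonneg _
  have hDsa : IsSelfAdjoint D :=
    ((ContinuousLinearMap.nonneg_iff_isPositive D).mp hDpos).isSelfAdjoint
  have hDD : D * D = A := by
    have := CFC.sq_sqrt A hApos
    rwa [pow_two] at this
  have hDadj : ContinuousLinearMap.adjoint D = D := by
    rw [← ContinuousLinearMap.star_eq_adjoint]; exact hDsa
  have hDinner : ∀ x y : EuclideanSpace ℂ (Fin n),
      (inner ℂ (D x) (D y) : ℂ) = inner ℂ x y - inner ℂ (W x) (W y) := by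
    intro x y
    have h1 := ContinuousLinearMap.adjoint_inner_right D x (D y)
    rw [hDadj] at h1
    have h2 : D (D y) = A y := by
      have := congrArg (fun f => f y) hDD
      simpa [ContinuousLinearMap.mul_apply] using this
    rw [← h1, h2, hA_def]
    simp only [ContinuousLinearMap.sub_apply, ContinuousLinearMap.one_apply,
      ContinuousLinearMap.comp_apply, inner_sub_right,
      ContinuousLinearMap.adjoint_inner_right]
  -- the unit vector z
  set e : EuclideanSpace ℂ (Fin 1) := EuclideanSpace.single (0 : Fin 1) (1 : ℂ) with he_def
  have he : ‖e‖ = 1 := by simp [he_def]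
  set z : PiLp 2 (fun _ : Fin m₀ => H) := Z₀ e with hz_def
  have hz : ‖z‖ = 1 := by rw [hz_def, hZ₀iso, he]
  have hzz : (∑ l, (inner ℂ (z l) (z l) : ℂ)) = 1 := by
    have h : (inner ℂ z z : ℂ) = 1 := by
      rw [inner_self_eq_norm_sq_to_K, hz]; norm_num
    rw [← h, PiLp.inner_apply]
  have hzX : ∀ i, (∑ l, (inner ℂ (X i (z l)) (z l) : ℂ)) = 0 := by
    intro i
    have h0 : (ContinuousLinearMap.adjoint Z₀) ((amp m₀ (X i)) (Z₀ e)) = 0 := by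
      have := congrArg (fun f => f e) (hZ₀zero i)
      simpa using this
    have h1 : (inner ℂ (amp m₀ (X i) z) z : ℂ) = 0 := by
      rw [hz_def, ← ContinuousLinearMap.adjoint_inner_left, h0, inner_zero_left]
    rw [← h1, PiLp.inner_apply]
    simp only [amp_apply]
  -- the map T
  let Tfun : EuclideanSpace ℂ (Fin n) → PiLp 2 (fun _ : Fin (m + n * m₀) => H) := fun x => WithLp.toLp 2 (fun k =>
    Fin.addCases (fun j => W x j)
      (fun j => ((D x) (finProdFinEquiv.symm j).1) • z ((finProdFinEquiv.symm j).2)) k)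
  have Tadd : ∀ x y, Tfun (x + y) = Tfun x + Tfun y := by
    intro x y; ext k
    have h : (Tfun x + Tfun y) k = Tfun x k + Tfun y k := rfl
    rw [h]
    refine Fin.addCases (fun j => ?_) (fun j => ?_) k <;>
      simp [Tfun, Fin.addCases_left, Fin.addCases_right, add_smul, PiLp.add_apply]
  have Tsmul : ∀ (c : ℂ) (x : EuclideanSpace ℂ (Fin n)), Tfun (c • x) = c • Tfun x := by
    intro c x; ext k
    have h : (c • Tfun x) k = c • Tfun x k := rfl
    rw [h]
    refine Fin.addCases (fun j => ?_) (fun j => ?_) k <;>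
      simp [Tfun, Fin.addCases_left, Fin.addCases_right, smul_smul, PiLp.smul_apply]
  let Tl : EuclideanSpace ℂ (Fin n) →ₗ[ℂ] PiLp 2 (fun _ : Fin (m + n * m₀) => H) :=
    { toFun := Tfun, map_add' := Tadd, map_smul' := Tsmul }
  let T : EuclideanSpace ℂ (Fin n) →L[ℂ] PiLp 2 (fun _ : Fin (m + n * m₀) => H) :=
    LinearMap.toContinuousLinearMap Tl
  have hT_apply : ∀ x (k : Fin (m + n * m₀)), T x k = Tfun x k := fun x k => rfl
  -- key computation
  have key : ∀ (B : H →L[ℂ] H) (x y : EuclideanSpace ℂ (Fin n)),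
      (∑ k, (inner ℂ (B (T x k)) (T y k) : ℂ))
        = (∑ j, (inner ℂ (B (W x j)) (W y j) : ℂ))
          + (inner ℂ (D x) (D y) : ℂ) * (∑ l, (inner ℂ (B (z l)) (z l) : ℂ)) := by
    intro B x y
    simp only [hT_apply]
    rw [Fin.sum_univ_add]
    congr 1
    · apply Finset.sum_congr rfl
      intro j _
      simp [Tfun, Fin.addCases_left]
    · have h1 : ∀ j : Fin (n * m₀),
          (inner ℂ (B (Tfun x (Fin.natAdd m j))) (Tfun y (Fin.natAdd m j)) : ℂ)
            = (starRingEnd ℂ) ((D x) (finProdFinEquiv.symm j).1)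
                * ((D y) (finProdFinEquiv.symm j).1)
                * (inner ℂ (B (z ((finProdFinEquiv.symm j).2)))
                    (z ((finProdFinEquiv.symm j).2)) : ℂ) := by
        intro j
        simp only [Tfun, Fin.addCases_right, map_smul]
        rw [inner_smul_left, inner_smul_right]
        ring
      rw [Finset.sum_congr rfl fun j _ => h1 j]
      rw [Fintype.sum_equiv finProdFinEquiv.symm
        (fun j => (starRingEnd ℂ) ((D x) (finProdFinEquiv.symm j).1)
            * ((D y) (finProdFinEquiv.symm j).1)
            * (inner ℂ (B (z ((finProdFinEquiv.symm j).2)))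
                (z ((finProdFinEquiv.symm j).2)) : ℂ))
        (fun q : Fin n × Fin m₀ => (starRingEnd ℂ) ((D x) q.1) * ((D y) q.1)
            * (inner ℂ (B (z q.2)) (z q.2) : ℂ)) (fun j => rfl)]
      rw [Fintype.sum_prod_type]
      rw [PiLp.inner_apply, Finset.sum_mul]
      apply Finset.sum_congr rfl
      intro a _
      have hred : ∀ b : Fin m₀, (starRingEnd ℂ) ((D x) ((a, b).1)) * ((D y) ((a, b).1))
          * (inner ℂ (B (z ((a, b).2))) (z ((a, b).2)) : ℂ)
          = ((starRingEnd ℂ) ((D x) a) * ((D y) a)) * (inner ℂ (B (z b)) (z b) : ℂ) :=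
        fun b => by rw [mul_assoc]
      rw [Finset.sum_congr rfl fun b _ => hred b, ← Finset.mul_sum]
      congr 1
      all_goals simp [RCLike.inner_apply, mul_comm]
  have hTT : ∀ x y : EuclideanSpace ℂ (Fin n), (inner ℂ (T x) (T y) : ℂ) = inner ℂ x y := by
    intro x y
    have hk := key (ContinuousLinearMap.id ℂ H) x y
    simp only [ContinuousLinearMap.id_apply] at hk
    calc (inner ℂ (T x) (T y) : ℂ) = ∑ k, (inner ℂ (T x k) (T y k) : ℂ) := PiLp.inner_apply _ _
    _ = (∑ j, (inner ℂ (W x j) (W y j) : ℂ))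
          + (inner ℂ (D x) (D y) : ℂ) * (∑ l, (inner ℂ (z l) (z l) : ℂ)) := hk
    _ = (inner ℂ (W x) (W y) : ℂ) + ((inner ℂ x y : ℂ) - inner ℂ (W x) (W y)) := by
        rw [hzz, mul_one, hDinner, ← PiLp.inner_apply]
    _ = inner ℂ x y := by ring
  refine ⟨T, ?_, ?_⟩
  · intro x
    have h := hTT x x
    rw [inner_self_eq_norm_sq_to_K, inner_self_eq_norm_sq_to_K] at h
    have h2 : ‖T x‖ ^ 2 = ‖x‖ ^ 2 := by exact_mod_cast h
    nlinarith [norm_nonneg (T x), norm_nonneg x]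
  · intro i
    refine ContinuousLinearMap.ext fun x => ?_
    refine ext_inner_right ℂ fun y => ?_
    simp only [ContinuousLinearMap.comp_apply]
    rw [ContinuousLinearMap.adjoint_inner_left, ContinuousLinearMap.adjoint_inner_left]
    rw [PiLp.inner_apply, PiLp.inner_apply]
    simp only [amp_apply]
    rw [key (X i) x y, hzX i, mul_zero, add_zero]
end

section
/- Let X = diag(λ_1, λ_2, ...) on ℓ²(ℕ) with λ_j nonzero reals of pairwise distinct absolute values converging to 0, and let W be a nonzero closed invariant subspace. Let J be the set of indices j for which some vector in W has nonzero j-th coordinate, and let j_0 ∈ J be the unique index maximizing |λ_j| over J. Then the basis vector e_{j_0} belongs to W. -/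
set_option maxHeartbeats 1000000
set_option synthInstance.maxHeartbeats 400000

open scoped ENNReal

private noncomputable def evalCLM (j : ℕ) : lp (fun _ : ℕ => ℂ) 2 →L[ℂ] ℂ :=
  LinearMap.mkContinuous
    { toFun := fun f => f j
      map_add' := fun f g => by simp [lp.coeFn_add]
      map_smul' := fun c f => by simp [lp.coeFn_smul] }
    1 fun f => by
      rw [one_mul]
      exact lp.norm_apply_le_norm (by norm_num) f j

private lemma lp2_sub_apply (f g : lp (fun _ : ℕ => ℂ) 2) (j : ℕ) :
    (f - g : lp (fun _ : ℕ => ℂ) 2) j = f j - g j := rfl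

private lemma lp2_smul_apply (c : ℂ) (f : lp (fun _ : ℕ => ℂ) 2) (j : ℕ) :
    (c • f : lp (fun _ : ℕ => ℂ) 2) j = c * f j := rfl

private lemma lp2_norm_mono (f g : lp (fun _ : ℕ => ℂ) 2)
    (h : ∀ j, ‖f j‖ ≤ ‖g j‖) : ‖f‖ ≤ ‖g‖ := by
  have hp : (0:ℝ) < (2:ℝ≥0∞).toReal := by norm_num
  rw [lp.norm_eq_tsum_rpow hp f, lp.norm_eq_tsum_rpow hp g]
  refine Real.rpow_le_rpow (tsum_nonneg fun j => Real.rpow_nonneg (norm_nonneg _) _) ?_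
    (by norm_num)
  exact Summable.tsum_le_tsum
    (fun j => Real.rpow_le_rpow (norm_nonneg _) (h j) (by norm_num))
    (Memℓp.summable hp (lp.memℓp f)) (Memℓp.summable hp (lp.memℓp g))

/-- for `X = diag(λ₁, λ₂, …)` on `ℓ²(ℕ)` with `λ_j` nonzero reals of
pairwise distinct absolute values converging to `0`, and `W ≠ {0}` a closed invariant
subspace, if `j₀` is the index maximizing `|λ_j|` over the set
`J = { j : some v ∈ W has v_j ≠ 0 }`, then `e_{j₀} ∈ W`. -/
theorem top_eigenvector_mem_invariant_subspace
    (lam : ℕ → ℝ) (hne : ∀ j, lam j ≠ 0)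
    (hdist : ∀ j k, |lam j| = |lam k| → j = k)
    (hlim : Filter.Tendsto lam Filter.atTop (nhds 0))
    (X : lp (fun _ : ℕ => ℂ) 2 →L[ℂ] lp (fun _ : ℕ => ℂ) 2)
    (hX : ∀ j, X (lp.single 2 j (1 : ℂ)) = (lam j : ℂ) • lp.single 2 j (1 : ℂ))
    (W : Submodule ℂ (lp (fun _ : ℕ => ℂ) 2))
    (hWclosed : IsClosed (W : Set (lp (fun _ : ℕ => ℂ) 2)))
    (hWinv : ∀ v ∈ W, X v ∈ W) (hWne : W ≠ ⊥)
    (j₀ : ℕ) (hj₀mem : ∃ v ∈ W, v j₀ ≠ 0)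
    (hj₀max : ∀ j, (∃ v ∈ W, v j ≠ 0) → |lam j| ≤ |lam j₀|) :
    lp.single 2 j₀ (1 : ℂ) ∈ W := by
  obtain ⟨v, hvW, hvj₀⟩ := hj₀mem
  haveI : Fact ((1:ℝ≥0∞) ≤ 2) := ⟨by norm_num⟩
  -- coordinates of X
  have hXc : ∀ (f : lp (fun _ : ℕ => ℂ) 2) (j : ℕ), X f j = (lam j : ℂ) * f j := by
    intro f j
    have h1 : HasSum (fun i : ℕ => lp.single 2 i (f i)) f :=
      lp.hasSum_single (by norm_num) f
    have h3 : HasSum (fun i : ℕ => (evalCLM j) (X (lp.single 2 i (f i)))) ((evalCLM j) (X f)) :=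
      (evalCLM j).hasSum (X.hasSum h1)
    have h4 : (fun i : ℕ => (evalCLM j) (X (lp.single 2 i (f i))))
        = fun i => if i = j then (lam j : ℂ) * f j else 0 := by
      funext i
      have hs : lp.single 2 i (f i) = f i • (lp.single 2 i (1:ℂ) : lp (fun _ : ℕ => ℂ) 2) := by
        rw [← lp.single_smul]; norm_num
      show (X (lp.single 2 i (f i))) j = _
      rw [hs, map_smul, hX i]
      by_cases h : i = j
      · subst h
        simp [lp.coeFn_smul, lp.single_apply_self, smul_eq_mul, lp2_smul_apply, -Complex.coe_smul]
        ring
      · simp [lp.coeFn_smul, lp.single_apply_ne (E := fun _ : ℕ => ℂ) 2 i (1:ℂ) (Ne.symm h), smul_eq_mul, h, lp2_smul_apply, -Complex.coe_smul]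
    rw [h4] at h3
    exact h3.unique (hasSum_ite_eq j _)
  -- coordinates of iterates
  have hXit : ∀ (ℓ : ℕ) (f : lp (fun _ : ℕ => ℂ) 2) (j : ℕ),
      ((⇑X)^[ℓ] f) j = (lam j : ℂ)^ℓ * f j := by
    intro ℓ
    induction ℓ with
    | zero => intro f j; simp
    | succ n ih =>
      intro f j
      rw [Function.iterate_succ_apply', hXc, ih, pow_succ]
      ring
  have hitW : ∀ (ℓ : ℕ), (⇑X)^[ℓ] v ∈ W := by
    intro ℓ
    induction ℓ with
    | zero => simpa using hvW
    | succ n ih => rw [Function.iterate_succ_apply']; exact hWinv _ ih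
  set e : lp (fun _ : ℕ => ℂ) 2 := lp.single 2 j₀ (1 : ℂ) with he
  set c : ℂ := v j₀ with hc
  set w : lp (fun _ : ℕ => ℂ) 2 := v - c • e with hw
  have hwj₀ : w j₀ = 0 := by
    simp [hw, lp.coeFn_sub, lp.coeFn_smul, he, lp.single_apply_self, hc, lp2_sub_apply, lp2_smul_apply]
  have hwj : ∀ j, j ≠ j₀ → w j = v j := by
    intro j hj
    have hsj : (lp.single 2 j₀ (1:ℂ) : lp (fun _ : ℕ => ℂ) 2) j = 0 :=
      lp.single_apply_ne (E := fun _ : ℕ => ℂ) 2 j₀ (1:ℂ) hj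
    simp [hw, lp.coeFn_sub, lp.coeFn_smul, he, hsj, lp2_sub_apply, lp2_smul_apply, Pi.single_apply, hj]
  have habs0 : (0:ℝ) < |lam j₀| := abs_pos.mpr (hne j₀)
  -- strictness
  have hAlt : ∀ j, j ≠ j₀ → v j ≠ 0 → |lam j| < |lam j₀| := by
    intro j hj hvj
    exact lt_of_le_of_ne (hj₀max j ⟨v, hvW, hvj⟩) (fun h => hj (hdist j j₀ h))
  -- tail bound
  obtain ⟨N, hN⟩ : ∃ N, ∀ j ≥ N, |lam j| < |lam j₀| / 2 := by
    have := Metric.tendsto_atTop.mp hlim (|lam j₀| / 2) (by positivity)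
    obtain ⟨N, hN⟩ := this
    exact ⟨N, fun j hj => by simpa [Real.dist_eq] using hN j hj⟩
  -- ratio r
  set F : Finset ℝ := insert (|lam j₀| / 2)
    (((Finset.range N).filter (fun j => j ≠ j₀ ∧ v j ≠ 0)).image (fun j => |lam j|)) with hF
  have hFne : F.Nonempty := ⟨_, Finset.mem_insert_self _ _⟩
  set M : ℝ := F.max' hFne with hM
  have hMlt : M < |lam j₀| := by
    rw [hM, Finset.max'_lt_iff]
    intro x hx
    rw [hF, Finset.mem_insert] at hx
    rcases hx with rfl | hx
    · linarith
    · obtain ⟨j, hj, rfl⟩ := Finset.mem_image.mp hx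
      obtain ⟨-, hj1, hj2⟩ := Finset.mem_filter.mp hj
      exact hAlt j hj1 hj2
  have hMge : |lam j₀| / 2 ≤ M := Finset.le_max' _ _ (Finset.mem_insert_self _ _)
  have hMpos : 0 < M := lt_of_lt_of_le (by linarith) hMge
  have hMle : ∀ j, j ≠ j₀ → v j ≠ 0 → |lam j| ≤ M := by
    intro j hj hvj
    rcases lt_or_ge j N with hjN | hjN
    · refine Finset.le_max' _ _ ?_
      rw [hF]
      refine Finset.mem_insert_of_mem (Finset.mem_image.mpr ⟨j, ?_, rfl⟩)
      exact Finset.mem_filter.mpr ⟨Finset.mem_range.mpr hjN, hj, hvj⟩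
    · exact le_trans (hN j hjN).le hMge
  set r : ℝ := M / |lam j₀| with hr
  have hr0 : 0 ≤ r := by positivity
  have hr1 : r < 1 := (div_lt_one habs0).mpr hMlt
  have hrM : r * |lam j₀| = M := div_mul_cancel₀ M habs0.ne'
  -- coordinatewise bound on iterates of w
  have hcoord : ∀ (ℓ j : ℕ), ‖((⇑X)^[ℓ] w) j‖ ≤ (r * |lam j₀|)^ℓ * ‖w j‖ := by
    intro ℓ j
    rw [hXit ℓ w j]
    by_cases hwz : w j = 0
    · simp [hwz]
    · have hj : j ≠ j₀ := fun h => hwz (h ▸ hwj₀)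
      have hvj : v j ≠ 0 := by rw [← hwj j hj]; exact hwz
      have h1 : |lam j| ≤ r * |lam j₀| := by rw [hrM]; exact hMle j hj hvj
      rw [norm_mul, norm_pow]
      have : ‖((lam j : ℝ) : ℂ)‖ = |lam j| := by
        rw [Complex.norm_real, Real.norm_eq_abs]
      rw [this]
      exact mul_le_mul_of_nonneg_right
        (pow_le_pow_left₀ (abs_nonneg _) h1 ℓ) (norm_nonneg _)
  -- norm bound on iterates of w
  have hnorm : ∀ ℓ : ℕ, ‖(⇑X)^[ℓ] w‖ ≤ (r * |lam j₀|)^ℓ * ‖w‖ := by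
    intro ℓ
    have := lp2_norm_mono ((⇑X)^[ℓ] w) ((((r * |lam j₀|)^ℓ : ℝ) : ℂ) • w) ?_
    · rw [norm_smul] at this
      have h2 : ‖((((r * |lam j₀|)^ℓ : ℝ)) : ℂ)‖ = (r * |lam j₀|)^ℓ := by
        rw [Complex.norm_real, Real.norm_eq_abs, abs_of_nonneg (by positivity)]
      rwa [h2] at this
    · intro j
      rw [lp.coeFn_smul, Pi.smul_apply, norm_smul]
      have h2 : ‖((((r * |lam j₀|)^ℓ : ℝ)) : ℂ)‖ = (r * |lam j₀|)^ℓ := by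
        rw [Complex.norm_real, Real.norm_eq_abs, abs_of_nonneg (by positivity)]
      rw [h2]
      exact hcoord ℓ j
  -- the approximating sequence
  set u : ℕ → lp (fun _ : ℕ => ℂ) 2 := fun ℓ => (((lam j₀ : ℂ))^ℓ)⁻¹ • (⇑X)^[ℓ] v with hu
  have hlamC : ∀ ℓ : ℕ, ((lam j₀ : ℂ))^ℓ ≠ 0 :=
    fun ℓ => pow_ne_zero ℓ (by exact_mod_cast hne j₀)
  have huW : ∀ ℓ, u ℓ ∈ W := fun ℓ => W.smul_mem _ (hitW ℓ)
  have hkey : ∀ ℓ : ℕ, u ℓ - c • e = (((lam j₀ : ℂ))^ℓ)⁻¹ • (⇑X)^[ℓ] w := by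
    intro ℓ
    apply lp.ext
    funext j
    have h1 : (u ℓ - c • e) j = (((lam j₀:ℂ))^ℓ)⁻¹ * ((lam j:ℂ)^ℓ * v j) - c * e j := by
      simp [hu, lp.coeFn_sub, lp.coeFn_smul, Pi.sub_apply, Pi.smul_apply, smul_eq_mul,
        hXit ℓ v j, lp2_sub_apply, lp2_smul_apply]
    have h2 : ((((lam j₀:ℂ))^ℓ)⁻¹ • (⇑X)^[ℓ] w) j
        = (((lam j₀:ℂ))^ℓ)⁻¹ * ((lam j:ℂ)^ℓ * w j) := by
      simp [lp.coeFn_smul, Pi.smul_apply, smul_eq_mul, hXit ℓ w j]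
    show (u ℓ - c • e) j = ((((lam j₀:ℂ))^ℓ)⁻¹ • (⇑X)^[ℓ] w) j
    rw [h1, h2]
    by_cases hj : j = j₀
    · subst hj
      rw [hwj₀, he, lp.single_apply_self, inv_mul_cancel_left₀ (hlamC ℓ)]
      simp [hc]
    · have hsj : (lp.single 2 j₀ (1:ℂ) : lp (fun _ : ℕ => ℂ) 2) j = 0 :=
        lp.single_apply_ne (E := fun _ : ℕ => ℂ) 2 j₀ (1:ℂ) hj
      rw [hwj j hj, he, hsj]
      ring
  have hbound : ∀ ℓ : ℕ, ‖u ℓ - c • e‖ ≤ r^ℓ * ‖w‖ := by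
    intro ℓ
    rw [hkey ℓ, norm_smul]
    have h1 : ‖(((lam j₀ : ℂ))^ℓ)⁻¹‖ = (|lam j₀|^ℓ)⁻¹ := by
      rw [norm_inv, norm_pow, Complex.norm_real, Real.norm_eq_abs]
    rw [h1]
    calc (|lam j₀|^ℓ)⁻¹ * ‖(⇑X)^[ℓ] w‖
        ≤ (|lam j₀|^ℓ)⁻¹ * ((r * |lam j₀|)^ℓ * ‖w‖) := by
          exact mul_le_mul_of_nonneg_left (hnorm ℓ) (by positivity)
      _ = r^ℓ * ‖w‖ := by
          rw [mul_pow]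
          field_simp
  have htend : Filter.Tendsto u Filter.atTop (nhds (c • e)) := by
    rw [tendsto_iff_norm_sub_tendsto_zero]
    refine squeeze_zero (fun ℓ => norm_nonneg _) hbound ?_
    have := (tendsto_pow_atTop_nhds_zero_of_lt_one hr0 hr1).mul_const ‖w‖
    simpa using this
  have hce : c • e ∈ W :=
    hWclosed.mem_of_tendsto htend (Filter.Eventually.of_forall huW)
  have : (c⁻¹ : ℂ) • (c • e) ∈ W := W.smul_mem _ hce
  rwa [inv_smul_smul₀ hvj₀] at this
end
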